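/- Let P = γ⁰·c₊ + γ¹·c₋ + γ³·s + (γ⁵/p − i/r)·ab, where c± = Δ/(2r₊³) + 2Mr²/r₊³ ± r₊³/(2r²) and s = sinθcosθ(a²−b²)/p. Then P is invertible and P⁻¹ = (−1/(Σ+2M))·(γ⁰c₊ + γ¹c₋ + γ³s + (γ⁵/p + i/r)ab), i.e. P·(γ⁰c₊ + γ¹c₋ + γ³s + (γ⁵/p + i/r)ab) = −(Σ+2M)·I₄. -/

import Mathlib

/-- The prefactor P = γ⁰c₊ + γ¹c₋ + γ³s + (γ⁵/p − i/r)ab of ∂_τ in the Dirac equation is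
invertible, with P·(γ⁰c₊ + γ¹c₋ + γ³s + (γ⁵/p + i/r)ab) = −(Σ+2M)·I₄, for any gamma
matrices satisfying the Clifford relations {γ^A,γ^B} = 2η^{AB} with η = diag(−1,1,1,1,1).
(Index 4 of `Fin 5` stands for the gamma-matrix label 5.) -/
theorem stmt11 (γ : Fin 5 → Matrix (Fin 4) (Fin 4) ℂ)
    (hcl : ∀ A B, γ A * γ B + γ B * γ A
      = (2 * if A = B then (if A = 0 then (-1:ℂ) else 1) else 0) • (1 : Matrix (Fin 4) (Fin 4) ℂ))
    (a b r θ M rp S p Δ cplus cminus s : ℝ)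
    (hr : 0 < r) (hppos : 0 < p) (hrp : 0 < rp) (hM : 0 < M)
    (hpdef : p^2 = a^2*(Real.cos θ)^2 + b^2*(Real.sin θ)^2)
    (hS : S = r^2 + p^2)
    (hΔ : Δ = (r^2+a^2)*(r^2+b^2) - 2*M*r^2)
    (hcp : cplus = Δ/(2*rp^3) + 2*M*r^2/rp^3 + rp^3/(2*r^2))
    (hcm : cminus = Δ/(2*rp^3) + 2*M*r^2/rp^3 - rp^3/(2*r^2))
    (hs : s = Real.sin θ * Real.cos θ * (a^2 - b^2)/p)
    (P Q : Matrix (Fin 4) (Fin 4) ℂ)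
    (hP : P = ((cplus : ℝ) : ℂ) • γ 0 + ((cminus : ℝ) : ℂ) • γ 1 + ((s : ℝ) : ℂ) • γ 3
            + (((a*b/p : ℝ)) : ℂ) • γ 4
            + (-(Complex.I * ((a*b/r : ℝ) : ℂ))) • (1 : Matrix (Fin 4) (Fin 4) ℂ))
    (hQ : Q = ((cplus : ℝ) : ℂ) • γ 0 + ((cminus : ℝ) : ℂ) • γ 1 + ((s : ℝ) : ℂ) • γ 3
            + (((a*b/p : ℝ)) : ℂ) • γ 4
            + (Complex.I * ((a*b/r : ℝ) : ℂ)) • (1 : Matrix (Fin 4) (Fin 4) ℂ)) :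
    P * Q = ((-(S + 2*M) : ℝ) : ℂ) • (1 : Matrix (Fin 4) (Fin 4) ℂ) ∧
    IsUnit P ∧
    P * (((-(S + 2*M) : ℝ)⁻¹ : ℂ) • Q) = 1 := by
  have hr' : r ≠ 0 := ne_of_gt hr
  have hp' : p ≠ 0 := ne_of_gt hppos
  have hrp' : rp ≠ 0 := ne_of_gt hrp
  -- the real scalar identity
  have hsc : (Real.sin θ)^2 + (Real.cos θ)^2 = 1 := Real.sin_sq_add_cos_sq θ
  have hp2 : p^2 ≠ 0 := pow_ne_zero 2 hp'
  have h1 : s^2 + (a*b/p)^2 = a^2 + b^2 - p^2 := by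
    have h : (Real.sin θ * Real.cos θ * (a^2-b^2))^2 + (a*b)^2 = p^2*(a^2+b^2-p^2) := by
      rw [hpdef]
      linear_combination ((a^2*(Real.cos θ)^2 + b^2*(Real.sin θ)^2)*(a^2+b^2)
        - a^2*b^2*((Real.sin θ)^2+(Real.cos θ)^2+1))*hsc
    rw [hs, div_pow, div_pow, ← add_div, h, mul_comm, mul_div_assoc, div_self hp2, mul_one]
  have key : -cplus^2 + cminus^2 + s^2 + (a*b/p)^2 + (a*b/r)^2 = -(S + 2*M) := by
    have h2 : -cplus^2 + cminus^2 + s^2 + (a*b/p)^2 + (a*b/r)^2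
        = -cplus^2 + cminus^2 + (a^2+b^2-p^2) + (a*b/r)^2 := by linear_combination h1
    rw [h2]
    subst hcp hcm hΔ hS
    field_simp
    ring
  -- the complex scalar identity
  have keyC : -((cplus:ℂ))^2 + ((cminus:ℂ))^2 + ((s:ℂ))^2 + (((a*b/p:ℝ)):ℂ)^2
      + (((a*b/r:ℝ)):ℂ)^2 = ((-(S + 2*M) : ℝ) : ℂ) := by
    exact_mod_cast congrArg (Complex.ofReal) key
  -- gamma matrix facts
  have two_ne : (2:ℂ) ≠ 0 := by norm_num
  have hsq : ∀ A : Fin 5, γ A * γ A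
      = (if A = 0 then (-1:ℂ) else 1) • (1 : Matrix (Fin 4) (Fin 4) ℂ) := by
    intro A
    have h := hcl A A
    rw [if_pos rfl] at h
    apply smul_right_injective _ two_ne
    show (2:ℂ) • (γ A * γ A) = (2:ℂ) • ((if A = 0 then (-1:ℂ) else 1) • (1 : Matrix (Fin 4) (Fin 4) ℂ))
    rw [two_smul, h, smul_smul]
  have h00 := hsq 0
  have h11 := hsq 1
  have h33 := hsq 3
  have h44 := hsq 4
  rw [if_pos rfl] at h00
  rw [if_neg (by decide)] at h11
  rw [if_neg (by decide)] at h33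
  rw [if_neg (by decide)] at h44
  have hanti : ∀ A B : Fin 5, A ≠ B → γ B * γ A = -(γ A * γ B) := by
    intro A B h
    have h' := hcl A B
    rw [if_neg h] at h'
    simp only [mul_zero, zero_smul] at h'
    exact eq_neg_of_add_eq_zero_right h'
  -- the product computation
  have hPQ : P * Q = ((-(S + 2*M) : ℝ) : ℂ) • (1 : Matrix (Fin 4) (Fin 4) ℂ) := by
    rw [hP, hQ]
    simp only [add_mul, mul_add, smul_mul_assoc, mul_smul_comm, smul_smul, mul_one, one_mul]
    rw [h00, h11, h33, h44, hanti 0 1 (by decide), hanti 0 3 (by decide), hanti 0 4 (by decide),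
      hanti 1 3 (by decide), hanti 1 4 (by decide), hanti 3 4 (by decide)]
    match_scalars <;>
      first
        | ring1
        | linear_combination (norm := (push_cast; ring1)) keyC + ((a:ℂ)*b/r)^2*Complex.I_sq
        | linear_combination (norm := (push_cast; ring1)) keyC - ((a:ℂ)*b/r)^2*Complex.I_sq
        | linear_combination (norm := (push_cast; ring1)) -((a:ℂ)*b/r)^2*Complex.I_sq
        | linear_combination (norm := (push_cast; ring1)) ((a:ℂ)*b/r)^2*Complex.I_sq
  -- nonvanishing of the scalar
  have hk : ((-(S + 2*M) : ℝ) : ℂ) ≠ 0 := by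
    have hSpos : 0 < S := by rw [hS]; positivity
    have : -(S + 2*M) ≠ 0 := by nlinarith
    exact_mod_cast Complex.ofReal_ne_zero.mpr this
  have hinv : P * (((-(S + 2*M) : ℝ)⁻¹ : ℂ) • Q) = 1 := by
    rw [mul_smul_comm, hPQ, smul_smul]
    rw [show (((-(S + 2*M) : ℝ)⁻¹ : ℂ)) = (((-(S + 2*M) : ℝ)) : ℂ)⁻¹ by push_cast; ring]
    rw [inv_mul_cancel₀ hk, one_smul]
  exact ⟨hPQ, (Matrix.isUnit_iff_isUnit_det P).mpr (Matrix.isUnit_det_of_right_inverse hinv), hinv⟩
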